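/- Let q ≥ 2 and 1 ≤ t ≤ m be integers, and let M be an F×m array with entries in {0,...,q-1} that is an orthogonal array OA_λ(F,m,q,t) (so F = λq^t). Define S* = Σ_{e ∈ {0,...,q-1}^m} max_T N(e,T), where the maximum is over all t-element subsets T of {0,...,m-1}; S* is the number of distinct symbols of the PDA generated by Construction 1 from M with full column index set, so the associated transmission load is R = S*/F. Then S* ≥ F·(q−1)^t (equivalently R ≥ (q−1)^t). Moreover, if S* = F·(q−1)^t, then F ≥ q^{m−t}. -/

import Mathlib

/-- An `F × m` array `M` with entries in `{0,...,q-1}` is an orthogonal array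
`OA_λ(F,m,q,s)` of strength `s` and index `lam` if for every `s`-element subset
`S` of the column indices, every assignment of values to the coordinates in `S`
occurs exactly `lam` times among the rows of `M` restricted to `S`. -/
def IsOA (F m q s lam : ℕ) (M : Fin F → Fin m → Fin q) : Prop :=
  ∀ S : Finset (Fin m), S.card = s → ∀ v : Fin m → Fin q,
    {r : Fin F | ∀ i ∈ S, M r i = v i}.ncard = lam

/-- `Ncount M e T` is `N(e,T)`: the number of rows `f` of `M` with `f_i = e_i`
for all `i ∉ T` and `f_i ≠ e_i` for all `i ∈ T`, i.e. the number of times the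
vector `e` is induced in column `(T, e|_T)` of the array of Construction 1
built from `M` with full column index set. -/
noncomputable def Ncount {F m q : ℕ} (M : Fin F → Fin m → Fin q) (e : Fin m → Fin q)
    (T : Finset (Fin m)) : ℕ :=
  {r : Fin F | (∀ i ∉ T, M r i = e i) ∧ (∀ i ∈ T, M r i ≠ e i)}.ncard

namespace OAaux

open Finset Function
open scoped Classical

variable {F m q : ℕ}

/-- The number of rows agreeing with `u` outside `T₀`. -/
noncomputable def cnt (M : Fin F → Fin m → Fin q) (T₀ : Finset (Fin m)) (u : Fin m → Fin q) : ℕ :=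
  (Finset.univ.filter fun r : Fin F => ∀ j ∉ T₀, M r j = u j).card

lemma Ncount_eq (M : Fin F → Fin m → Fin q) (e : Fin m → Fin q) (T : Finset (Fin m)) :
    Ncount M e T = (Finset.univ.filter fun r : Fin F =>
      (∀ i ∉ T, M r i = e i) ∧ (∀ i ∈ T, M r i ≠ e i)).card := by
  rw [Ncount, Set.ncard_eq_toFinset_card']
  congr 1
  ext r
  simp

lemma card_e_slice (M : Fin F → Fin m → Fin q) (r : Fin F) (T : Finset (Fin m)) :
    (Finset.univ.filter fun e : Fin m → Fin q =>
      (∀ i ∉ T, M r i = e i) ∧ (∀ i ∈ T, M r i ≠ e i)).card = (q-1)^T.card := by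
  have hset : (Finset.univ.filter fun e : Fin m → Fin q =>
      (∀ i ∉ T, M r i = e i) ∧ (∀ i ∈ T, M r i ≠ e i)) =
      Fintype.piFinset (fun i => if i ∈ T then ({M r i}ᶜ : Finset (Fin q)) else {M r i}) := by
    ext e
    simp only [mem_filter, mem_univ, true_and, Fintype.mem_piFinset]
    constructor
    · rintro ⟨h1, h2⟩ i
      by_cases hi : i ∈ T <;> simp [hi]
      · exact fun h => h2 i hi h.symm
      · exact (h1 i hi).symm
    · intro h
      constructor
      · intro i hi; have := h i; simp [hi] at this; exact this.symm
      · intro i hi; have := h i; simp [hi] at this; exact fun hh => this hh.symm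
  rw [hset, Fintype.card_piFinset]
  have hcard : ∀ i : Fin m, ((if i ∈ T then ({M r i}ᶜ : Finset (Fin q)) else {M r i}).card)
      = if i ∈ T then q - 1 else 1 := by
    intro i
    by_cases hi : i ∈ T <;> simp [hi, Finset.card_compl]
  simp_rw [hcard]
  rw [Finset.prod_ite_mem, univ_inter, Finset.prod_const]

lemma sum_Ncount (M : Fin F → Fin m → Fin q) (T : Finset (Fin m)) :
    ∑ e : Fin m → Fin q, Ncount M e T = F * (q-1)^T.card := by
  simp_rw [Ncount_eq, Finset.card_filter]
  rw [Finset.sum_comm]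
  simp_rw [← Finset.card_filter, card_e_slice]
  simp [mul_comm]

lemma inner_slice (M : Fin F → Fin m → Fin q) (T₀ T : Finset (Fin m)) (u : Fin m → Fin q)
    (r : Fin F) :
    (Finset.univ.filter fun e : Fin m → Fin q =>
      (∀ j ∉ T₀, e j = u j) ∧ (∀ i ∉ T, M r i = e i) ∧ (∀ i ∈ T, M r i ≠ e i)).card
    = if (∀ j ∉ T₀, j ∉ T → M r j = u j) ∧ (∀ j ∉ T₀, j ∈ T → M r j ≠ u j)
      then (q-1)^((T₀ ∩ T).card) else 0 := by
  split_ifs with hQ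
  · obtain ⟨hQ1, hQ2⟩ := hQ
    have hset : (Finset.univ.filter fun e : Fin m → Fin q =>
        (∀ j ∉ T₀, e j = u j) ∧ (∀ i ∉ T, M r i = e i) ∧ (∀ i ∈ T, M r i ≠ e i)) =
        Fintype.piFinset (fun i => if i ∈ T₀ then
          (if i ∈ T then ({M r i}ᶜ : Finset (Fin q)) else {M r i}) else {u i}) := by
      ext e
      simp only [mem_filter, mem_univ, true_and, Fintype.mem_piFinset]
      constructor
      · rintro ⟨h1, h2, h3⟩ i
        by_cases hi0 : i ∈ T₀ <;> by_cases hi : i ∈ T <;> simp [hi0, hi]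
        · exact fun h => h3 i hi h.symm
        · exact (h2 i hi).symm
        · exact h1 i hi0
        · exact h1 i hi0
      · intro h
        refine ⟨?_, ?_, ?_⟩
        · intro j hj; have := h j; simp [hj] at this; exact this
        · intro i hi
          by_cases hi0 : i ∈ T₀
          · have := h i; simp [hi0, hi] at this; exact this.symm
          · have := h i; simp [hi0] at this; rw [this]; exact hQ1 i hi0 hi
        · intro i hi
          by_cases hi0 : i ∈ T₀
          · have := h i; simp [hi0, hi] at this; exact fun hh => this hh.symm
          · have := h i; simp [hi0] at this; rw [this]; exact hQ2 i hi0 hi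
    rw [hset, Fintype.card_piFinset]
    have hcard : ∀ i : Fin m, ((if i ∈ T₀ then
        (if i ∈ T then ({M r i}ᶜ : Finset (Fin q)) else {M r i}) else {u i}).card)
        = if i ∈ T₀ ∩ T then q - 1 else 1 := by
      intro i
      by_cases hi0 : i ∈ T₀ <;> by_cases hi : i ∈ T <;>
        simp [hi0, hi, Finset.card_compl]
    simp_rw [hcard]
    rw [Finset.prod_ite_mem, univ_inter, Finset.prod_const]
  · rw [Finset.card_eq_zero, Finset.filter_eq_empty_iff]
    rintro e - ⟨h1, h2, h3⟩
    apply hQ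
    constructor
    · intro j hj hjT; rw [h2 j hjT]; exact h1 j hj
    · intro j hj hjT hcon; exact h3 j hjT (by rw [hcon, ← h1 j hj])

lemma sum_Ncount_slice (M : Fin F → Fin m → Fin q) (T₀ T : Finset (Fin m)) (u : Fin m → Fin q) :
    ∑ e ∈ Finset.univ.filter (fun e : Fin m → Fin q => ∀ j ∉ T₀, e j = u j),
      Ncount M e T
    = (q-1)^((T₀ ∩ T).card) *
      (Finset.univ.filter fun r : Fin F =>
        (∀ j ∉ T₀, j ∉ T → M r j = u j) ∧ (∀ j ∉ T₀, j ∈ T → M r j ≠ u j)).card := by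
  simp_rw [Ncount_eq, Finset.card_filter]
  rw [Finset.sum_comm]
  have key : ∀ r : Fin F,
      (∑ e ∈ Finset.univ.filter (fun e : Fin m → Fin q => ∀ j ∉ T₀, e j = u j),
        if (∀ i ∉ T, M r i = e i) ∧ (∀ i ∈ T, M r i ≠ e i) then 1 else 0)
      = if (∀ j ∉ T₀, j ∉ T → M r j = u j) ∧ (∀ j ∉ T₀, j ∈ T → M r j ≠ u j)
        then (q-1)^((T₀ ∩ T).card) else 0 := by
    intro r
    rw [Finset.sum_filter]
    have hin := inner_slice M T₀ T u r
    rw [Finset.card_filter] at hin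
    rw [← hin]
    apply Finset.sum_congr rfl
    intro e _
    split_ifs <;> simp_all
  simp_rw [key]
  rw [Finset.mul_sum]
  apply Finset.sum_congr rfl
  intro r _
  split_ifs <;> simp

lemma cnt_congr (M : Fin F → Fin m → Fin q) (T₀ : Finset (Fin m)) {u v : Fin m → Fin q}
    (h : ∀ j ∉ T₀, u j = v j) : cnt M T₀ u = cnt M T₀ v := by
  unfold cnt
  congr 1
  apply Finset.filter_congr
  intro r _
  constructor
  · intro hh j hj; rw [← h j hj]; exact hh j hj
  · intro hh j hj; rw [h j hj]; exact hh j hj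

lemma cnt_step (M : Fin F → Fin m → Fin q) (T₀ : Finset (Fin m)) (hq : 2 ≤ q)
    (hline : ∀ u : Fin m → Fin q, ∀ i ∉ T₀,
      (q - 1) * cnt M T₀ u = ∑ a ∈ Finset.univ.erase (u i), cnt M T₀ (update u i a))
    (u : Fin m → Fin q) {i : Fin m} (hi : i ∉ T₀) (a b : Fin q) :
    cnt M T₀ (update u i a) = cnt M T₀ (update u i b) := by
  have key : ∀ x : Fin q, q * cnt M T₀ (update u i x) = ∑ y : Fin q, cnt M T₀ (update u i y) := by
    intro x
    have h1 := hline (update u i x) i hi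
    rw [update_self] at h1
    simp_rw [update_idem] at h1
    have h2 := Finset.add_sum_erase Finset.univ (fun y => cnt M T₀ (update u i y))
      (Finset.mem_univ x)
    have hq1 : q = (q - 1) + 1 := by omega
    calc q * cnt M T₀ (update u i x) = ((q-1)+1) * cnt M T₀ (update u i x) := by rw [← hq1]
      _ = (q-1) * cnt M T₀ (update u i x) + cnt M T₀ (update u i x) := by ring
      _ = ∑ y : Fin q, cnt M T₀ (update u i y) := by rw [h1, ← h2]; ring
  have := (key a).trans (key b).symm
  exact Nat.eq_of_mul_eq_mul_left (by omega) this

lemma cnt_const (M : Fin F → Fin m → Fin q) (T₀ : Finset (Fin m)) (hq : 2 ≤ q)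
    (hline : ∀ u : Fin m → Fin q, ∀ i ∉ T₀,
      (q - 1) * cnt M T₀ u = ∑ a ∈ Finset.univ.erase (u i), cnt M T₀ (update u i a))
    (u v : Fin m → Fin q) : cnt M T₀ u = cnt M T₀ v := by
  suffices h : ∀ D : Finset (Fin m), ∀ u v : Fin m → Fin q,
      (∀ j ∉ T₀, j ∉ D → u j = v j) → cnt M T₀ u = cnt M T₀ v by
    exact h Finset.univ u v (fun j _ hj => absurd (Finset.mem_univ j) hj)
  intro D
  induction D using Finset.induction_on with
  | empty =>
    intro u v h
    exact cnt_congr M T₀ (fun j hj => h j hj (Finset.notMem_empty j))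
  | @insert j D' hj IH =>
    intro u v h
    have h1 : cnt M T₀ u = cnt M T₀ (update v j (u j)) := by
      apply IH
      intro k hk hkD'
      by_cases hkj : k = j
      · subst hkj; rw [update_self]
      · rw [update_of_ne hkj]
        exact h k hk (by simp [hkj, hkD'])
    rw [h1]
    by_cases hjT : j ∈ T₀
    · refine cnt_congr M T₀ (fun k hk => ?_)
      have hkj : k ≠ j := fun hkj => hk (hkj ▸ hjT)
      exact update_of_ne hkj _ _
    · have := cnt_step M T₀ hq hline v hjT (u j) (v j)
      rwa [update_eq_self] at this

lemma sum_cnt (M : Fin F → Fin m → Fin q) (T₀ : Finset (Fin m)) :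
    ∑ u : Fin m → Fin q, cnt M T₀ u = F * q ^ T₀.card := by
  unfold cnt
  simp_rw [Finset.card_filter]
  rw [Finset.sum_comm]
  have key : ∀ r : Fin F,
      (∑ u : Fin m → Fin q, if ∀ j ∉ T₀, M r j = u j then 1 else 0) = q ^ T₀.card := by
    intro r
    rw [← Finset.card_filter]
    have hset : (Finset.univ.filter fun u : Fin m → Fin q => ∀ j ∉ T₀, M r j = u j) =
        Fintype.piFinset (fun i => if i ∈ T₀ then (Finset.univ : Finset (Fin q)) else {M r i}) := by
      ext u
      simp only [mem_filter, mem_univ, true_and, Fintype.mem_piFinset]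
      constructor
      · intro h i
        by_cases hi : i ∈ T₀ <;> simp [hi]
        exact (h i hi).symm
      · intro h j hj
        have := h j; simp [hj] at this; exact this.symm
    rw [hset, Fintype.card_piFinset]
    have hcard : ∀ i : Fin m,
        ((if i ∈ T₀ then (Finset.univ : Finset (Fin q)) else {M r i}).card)
        = if i ∈ T₀ then q else 1 := by
      intro i; by_cases hi : i ∈ T₀ <;> simp [hi]
    simp_rw [hcard]
    rw [Finset.prod_ite_mem, univ_inter, Finset.prod_const]
  simp_rw [key]
  simp [mul_comm]

lemma line_rel (M : Fin F → Fin m → Fin q) {t : ℕ} (T₀ : Finset (Fin m)) (hq : 2 ≤ q)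
    (ht : 1 ≤ t) (hT₀ : T₀.card = t)
    (hconst : ∀ T : Finset (Fin m), T.card = t → ∀ e, Ncount M e T = Ncount M e T₀)
    (u : Fin m → Fin q) : ∀ i ∉ T₀,
    (q - 1) * cnt M T₀ u = ∑ a ∈ Finset.univ.erase (u i), cnt M T₀ (update u i a) := by
  intro i hi
  obtain ⟨V, hVsub, hVcard⟩ := Finset.exists_subset_card_eq
    (show t - 1 ≤ T₀.card by omega)
  have hiV : i ∉ V := fun h => hi (hVsub h)
  set T₁ : Finset (Fin m) := insert i V with hT₁
  have hT₁card : T₁.card = t := by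
    rw [hT₁, Finset.card_insert_of_notMem hiV, hVcard]; omega
  have hsums : ∑ e ∈ Finset.univ.filter (fun e : Fin m → Fin q => ∀ j ∉ T₀, e j = u j),
      Ncount M e T₁
      = ∑ e ∈ Finset.univ.filter (fun e : Fin m → Fin q => ∀ j ∉ T₀, e j = u j),
      Ncount M e T₀ :=
    Finset.sum_congr rfl (fun e _ => hconst T₁ hT₁card e)
  rw [sum_Ncount_slice, sum_Ncount_slice] at hsums
  have hi₀ : T₀ ∩ T₀ = T₀ := Finset.inter_self T₀
  have hi₁ : T₀ ∩ T₁ = V := by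
    ext j
    simp only [hT₁, Finset.mem_inter, Finset.mem_insert]
    constructor
    · rintro ⟨hj0, hj⟩
      rcases hj with hj | hj
      · exact absurd (hj ▸ hj0) hi
      · exact hj
    · intro hjV
      exact ⟨hVsub hjV, Or.inr hjV⟩
  rw [hi₀, hi₁, hT₀, hVcard] at hsums
  have hA : (Finset.univ.filter fun r : Fin F =>
      (∀ j ∉ T₀, j ∉ T₀ → M r j = u j) ∧ (∀ j ∉ T₀, j ∈ T₀ → M r j ≠ u j)).card
      = cnt M T₀ u := by
    unfold cnt
    congr 1
    apply Finset.filter_congr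
    intro r _
    constructor
    · exact fun h j hj => h.1 j hj hj
    · exact fun h => ⟨fun j hj _ => h j hj, fun j hj hj' => absurd hj' hj⟩
  have hB : (Finset.univ.filter fun r : Fin F =>
      (∀ j ∉ T₀, j ∉ T₁ → M r j = u j) ∧ (∀ j ∉ T₀, j ∈ T₁ → M r j ≠ u j)).card
      = ∑ a ∈ Finset.univ.erase (u i), cnt M T₀ (update u i a) := by
    rw [Finset.card_eq_sum_card_fiberwise (f := fun r => M r i)
      (t := Finset.univ.erase (u i)) ?_]
    · apply Finset.sum_congr rfl
      intro a ha
      rw [Finset.mem_erase] at ha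
      unfold cnt
      rw [Finset.filter_filter]
      congr 1
      ext r
      simp only [mem_filter, mem_univ, true_and]
      constructor
      · rintro ⟨⟨h1, h2⟩, h3⟩ j hj
        by_cases hji : j = i
        · subst hji; rw [update_self]; exact h3
        · rw [update_of_ne hji]
          refine h1 j hj ?_
          rw [hT₁]
          simp only [Finset.mem_insert, not_or]
          exact ⟨hji, fun hjV => hj (hVsub hjV)⟩
      · intro h
        have hM : M r i = a := by have := h i hi; rwa [update_self] at this
        refine ⟨⟨?_, ?_⟩, hM⟩
        · intro j hj hjT₁
          have hji : j ≠ i := fun e => hjT₁ (e ▸ Finset.mem_insert_self i V)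
          have := h j hj; rwa [update_of_ne hji] at this
        · intro j hj hjT₁
          have hji : j = i := by
            rcases Finset.mem_insert.1 hjT₁ with h' | h'
            · exact h'
            · exact absurd (hVsub h') hj
          subst hji
          rw [hM]; exact ha.1
    · intro r hr
      simp only [Finset.mem_coe, mem_filter, mem_univ, true_and] at hr
      exact Finset.mem_erase.2 ⟨hr.2 i hi (Finset.mem_insert_self i V), Finset.mem_univ _⟩
  rw [hA, hB] at hsums
  have hpow : (q-1)^t = (q-1)^(t-1) * (q-1) := by
    rw [← pow_succ]; congr 1; omega
  rw [hpow, mul_assoc] at hsums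
  have := Nat.eq_of_mul_eq_mul_left (show 0 < (q-1)^(t-1) from pow_pos (by omega) _) hsums
  omega

end OAaux

theorem load_and_subpacketization_lower_bounds (q m t F lam : ℕ)
    (hq : 2 ≤ q) (ht : 1 ≤ t) (htm : t ≤ m) (hlam : 1 ≤ lam)
    (M : Fin F → Fin m → Fin q) (hOA : IsOA F m q t lam M)
    (hF : F = lam * q ^ t) :
    F * (q - 1) ^ t ≤
      ∑ e : Fin m → Fin q,
        (Finset.univ.filter fun T : Finset (Fin m) => T.card = t).sup
          (fun T => Ncount M e T) ∧
    ((∑ e : Fin m → Fin q,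
        (Finset.univ.filter fun T : Finset (Fin m) => T.card = t).sup
          (fun T => Ncount M e T)) = F * (q - 1) ^ t →
      q ^ (m - t) ≤ F) := by
  classical
  open Finset Function OAaux in
  obtain ⟨T₀, -, hT₀card⟩ : ∃ T₀ ⊆ (Finset.univ : Finset (Fin m)), T₀.card = t :=
    Finset.exists_subset_card_eq (by simpa using htm)
  have hmem : ∀ T : Finset (Fin m), T.card = t →
      T ∈ Finset.univ.filter fun T : Finset (Fin m) => T.card = t :=
    fun T hT => Finset.mem_filter.2 ⟨Finset.mem_univ _, hT⟩
  have hle : ∀ T : Finset (Fin m), T.card = t → ∀ e : Fin m → Fin q,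
      Ncount M e T ≤ (Finset.univ.filter fun T : Finset (Fin m) => T.card = t).sup
        (fun T => Ncount M e T) :=
    fun T hT e => Finset.le_sup (hmem T hT)
  have hpart1 : F * (q - 1) ^ t ≤
      ∑ e : Fin m → Fin q,
        (Finset.univ.filter fun T : Finset (Fin m) => T.card = t).sup
          (fun T => Ncount M e T) := by
    calc F * (q - 1) ^ t = ∑ e : Fin m → Fin q, Ncount M e T₀ := by
          rw [OAaux.sum_Ncount M T₀, hT₀card]
      _ ≤ _ := Finset.sum_le_sum (fun e _ => hle T₀ hT₀card e)
  refine ⟨hpart1, fun hS => ?_⟩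
  -- pointwise equality with the sup
  have hpt : ∀ T : Finset (Fin m), T.card = t → ∀ e : Fin m → Fin q,
      Ncount M e T = (Finset.univ.filter fun T : Finset (Fin m) => T.card = t).sup
        (fun T => Ncount M e T) := by
    intro T hT
    have hsum : ∑ e : Fin m → Fin q, Ncount M e T =
        ∑ e : Fin m → Fin q,
          (Finset.univ.filter fun T' : Finset (Fin m) => T'.card = t).sup
            (fun T' => Ncount M e T') := by
      rw [OAaux.sum_Ncount M T, hT, hS]
    have := (Finset.sum_eq_sum_iff_of_le (fun e _ => hle T hT e)).1 hsum
    exact fun e => this e (Finset.mem_univ e)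
  have hconst : ∀ T : Finset (Fin m), T.card = t → ∀ e : Fin m → Fin q,
      Ncount M e T = Ncount M e T₀ :=
    fun T hT e => (hpt T hT e).trans (hpt T₀ hT₀card e).symm
  have hline := fun u => OAaux.line_rel M T₀ hq ht hT₀card hconst u
  have hFpos : 0 < F := by
    rw [hF]; exact Nat.mul_pos hlam (pow_pos (by omega) t)
  set u₀ : Fin m → Fin q := M ⟨0, hFpos⟩ with hu₀
  have hcpos : 1 ≤ OAaux.cnt M T₀ u₀ := by
    rw [OAaux.cnt]
    exact Finset.card_pos.2 ⟨⟨0, hFpos⟩, by simp [hu₀]⟩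
  have hc := OAaux.cnt_const M T₀ hq hline
  have hsum1 : ∑ u : Fin m → Fin q, OAaux.cnt M T₀ u = F * q ^ t := by
    rw [OAaux.sum_cnt M T₀, hT₀card]
  have hsum2 : ∑ u : Fin m → Fin q, OAaux.cnt M T₀ u = q ^ m * OAaux.cnt M T₀ u₀ := by
    rw [Finset.sum_congr rfl (fun u _ => hc u u₀), Finset.sum_const]
    simp [Fintype.card_fun]
  have hmain : q ^ m ≤ F * q ^ t := by
    calc q ^ m ≤ q ^ m * OAaux.cnt M T₀ u₀ := Nat.le_mul_of_pos_right _ hcpos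
      _ = F * q ^ t := by rw [← hsum2, hsum1]
  have hqt : q ^ (m - t) * q ^ t = q ^ m := by
    rw [← pow_add, Nat.sub_add_cancel htm]
  have : q ^ (m - t) * q ^ t ≤ F * q ^ t := by rw [hqt]; exact hmain
  exact Nat.le_of_mul_le_mul_right this (pow_pos (by omega) t)
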